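/- arXiv:1810.08823 — 4 statements merged into one kernel-verified Lean document; each statement's English description precedes it below -/
import Mathlib

section
/- For all r in [0,1) and all b in (-1,1), with a = tan(bπ/4), the inequality (4/π)·arctan((a+r)/(1+ar)) ≤ ((1-r²)/(1+r²))·b + (4/π)·arctan(r) holds. -/
open Real Set

private lemma tan_facts {x : ℝ} (hx0 : -1 < x) (hx1 : x < 1) :
    (-1 < Real.tan (x * Real.pi / 4) ∧ Real.tan (x * Real.pi / 4) < 1) ∧
      Real.cos (x * Real.pi / 4) ≠ 0 := by
  have hπ := Real.pi_pos
  have h1 : -(Real.pi / 4) < x * Real.pi / 4 := by nlinarith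
  have h2 : x * Real.pi / 4 < Real.pi / 4 := by nlinarith
  have hlt : Real.tan (x * Real.pi / 4) < 1 := by
    rw [← Real.tan_pi_div_four]
    exact Real.tan_lt_tan_of_lt_of_lt_pi_div_two (by linarith) (by linarith) h2
  have hgt : -1 < Real.tan (x * Real.pi / 4) := by
    have h := Real.tan_lt_tan_of_lt_of_lt_pi_div_two (x := -(Real.pi / 4))
      (y := x * Real.pi / 4) (by linarith) (by linarith) h1
    rw [Real.tan_neg, Real.tan_pi_div_four] at h
    linarith
  have hcos : Real.cos (x * Real.pi / 4) ≠ 0 :=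
    (Real.cos_pos_of_mem_Ioo ⟨by linarith, by linarith⟩).ne'
  exact ⟨⟨hgt, hlt⟩, hcos⟩

private lemma hasDeriv_M (r : ℝ) (hr0 : 0 ≤ r) (hr1 : r < 1) {x : ℝ}
    (hx0 : -1 < x) (hx1 : x < 1) :
    HasDerivAt (fun b : ℝ => (4 / Real.pi) * Real.arctan
        ((Real.tan (b * Real.pi / 4) + r) / (1 + Real.tan (b * Real.pi / 4) * r)))
      ((1 - r ^ 2) * (1 + Real.tan (x * Real.pi / 4) ^ 2) /
        ((1 + Real.tan (x * Real.pi / 4) ^ 2) * (1 + r ^ 2)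
          + 4 * r * Real.tan (x * Real.pi / 4))) x := by
  obtain ⟨⟨hgt, hlt⟩, hcos⟩ := tan_facts hx0 hx1
  have hπ := Real.pi_pos
  set t := Real.tan (x * Real.pi / 4) with ht
  have hden : 0 < 1 + t * r := by nlinarith
  have h1 : HasDerivAt (fun b : ℝ => b * Real.pi / 4) (Real.pi / 4) x := by
    simpa using ((hasDerivAt_id x).mul_const Real.pi).div_const 4
  have h2 : HasDerivAt (fun b : ℝ => Real.tan (b * Real.pi / 4))
      (1 / Real.cos (x * Real.pi / 4) ^ 2 * (Real.pi / 4)) x := by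
    have h := (Real.hasDerivAt_tan hcos).comp x h1
    exact h
  have h3 : HasDerivAt
      (fun b : ℝ => (Real.tan (b * Real.pi / 4) + r) / (1 + Real.tan (b * Real.pi / 4) * r))
      ((1 / Real.cos (x * Real.pi / 4) ^ 2 * (Real.pi / 4) * (1 + t * r)
        - (t + r) * (1 / Real.cos (x * Real.pi / 4) ^ 2 * (Real.pi / 4) * r)) / (1 + t * r) ^ 2)
      x := (h2.add_const r).div ((h2.mul_const r).const_add 1) hden.ne'
  have h4 := h3.arctan
  have h5 := h4.const_mul (4 / Real.pi)
  refine h5.congr_deriv ?_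
  have hc : 1 / Real.cos (x * Real.pi / 4) ^ 2 = 1 + t ^ 2 := by
    rw [← Real.inv_one_add_tan_sq hcos, one_div, inv_inv, ht]
  have hu : 1 + ((t + r) / (1 + t * r)) ^ 2
      = ((1 + t * r) ^ 2 + (t + r) ^ 2) / (1 + t * r) ^ 2 := by
    field_simp
  have hQ : 0 < (1 + t * r) ^ 2 + (t + r) ^ 2 := by positivity
  have hQ' : 0 < (1 + t ^ 2) * (1 + r ^ 2) + 4 * r * t := by nlinarith
  have hQe : (1 + t * r) ^ 2 + (t + r) ^ 2 = (1 + t ^ 2) * (1 + r ^ 2) + 4 * r * t := by ring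
  rw [hu, hc, hQe]
  generalize (1 + t ^ 2) * (1 + r ^ 2) + 4 * r * t = Q at hQ' ⊢
  field_simp
  ring

/-- For all r in [0,1) and all b in (-1,1), with a = tan(bπ/4),
(4/π)·arctan((a+r)/(1+ar)) ≤ ((1-r²)/(1+r²))·b + (4/π)·arctan(r). -/
theorem Mb_le_Ab (r b a : ℝ) (hr0 : 0 ≤ r) (hr1 : r < 1)
    (hb0 : -1 < b) (hb1 : b < 1) (ha : a = Real.tan (b * Real.pi / 4)) :
    (4 / Real.pi) * Real.arctan ((a + r) / (1 + a * r)) ≤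
      ((1 - r ^ 2) / (1 + r ^ 2)) * b + (4 / Real.pi) * Real.arctan r := by
  subst ha
  have hπ := Real.pi_pos
  set F : ℝ → ℝ := fun x => ((1 - r ^ 2) / (1 + r ^ 2)) * x + (4 / Real.pi) * Real.arctan r
      - (4 / Real.pi) * Real.arctan
        ((Real.tan (x * Real.pi / 4) + r) / (1 + Real.tan (x * Real.pi / 4) * r)) with hFdef
  have key : ∀ x, -1 < x → x < 1 → HasDerivAt F
      ((1 - r ^ 2) / (1 + r ^ 2) - (1 - r ^ 2) * (1 + Real.tan (x * Real.pi / 4) ^ 2) /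
        ((1 + Real.tan (x * Real.pi / 4) ^ 2) * (1 + r ^ 2)
          + 4 * r * Real.tan (x * Real.pi / 4))) x := by
    intro x hx0 hx1
    exact ((hasDerivAt_id x).const_mul ((1 - r ^ 2) / (1 + r ^ 2))
      |>.add_const ((4 / Real.pi) * Real.arctan r)).sub (hasDeriv_M r hr0 hr1 hx0 hx1)
      |>.congr_deriv (by ring)
  have hF0 : F 0 = 0 := by simp [hFdef]
  have hsign : ∀ x, -1 < x → x < 1 →
      (1 - r ^ 2) / (1 + r ^ 2) - (1 - r ^ 2) * (1 + Real.tan (x * Real.pi / 4) ^ 2) /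
        ((1 + Real.tan (x * Real.pi / 4) ^ 2) * (1 + r ^ 2)
          + 4 * r * Real.tan (x * Real.pi / 4))
      = (1 - r ^ 2) * (4 * r * Real.tan (x * Real.pi / 4)) /
        ((1 + r ^ 2) * ((1 + Real.tan (x * Real.pi / 4) ^ 2) * (1 + r ^ 2)
          + 4 * r * Real.tan (x * Real.pi / 4))) := by
    intro x hx0 hx1
    obtain ⟨⟨hgt, hlt⟩, _⟩ := tan_facts hx0 hx1
    set t := Real.tan (x * Real.pi / 4)
    have hden : 0 < 1 + t * r := by
      nlinarith [mul_nonneg (by linarith : (0:ℝ) ≤ 1 + t) hr0]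
    have hQ' : 0 < (1 + t ^ 2) * (1 + r ^ 2) + 4 * r * t := by
      nlinarith [pow_pos hden 2, sq_nonneg (t + r)]
    have h1r : (0:ℝ) < 1 + r ^ 2 := by positivity
    rw [div_sub_div _ _ h1r.ne' hQ'.ne', div_eq_div_iff (mul_pos h1r hQ').ne' (mul_pos h1r hQ').ne']
    ring
  have hgoal : 0 ≤ F b → (4 / Real.pi) * Real.arctan
      ((Real.tan (b * Real.pi / 4) + r) / (1 + Real.tan (b * Real.pi / 4) * r)) ≤
      ((1 - r ^ 2) / (1 + r ^ 2)) * b + (4 / Real.pi) * Real.arctan r := by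
    intro h; rw [hFdef] at h; dsimp only at h; linarith
  apply hgoal
  rcases le_or_gt 0 b with hb | hb
  · have mono : MonotoneOn F (Icc 0 b) := by
      apply monotoneOn_of_deriv_nonneg (convex_Icc 0 b)
      · intro x hx
        exact (key x (by linarith [hx.1]) (lt_of_le_of_lt hx.2 hb1)).continuousAt.continuousWithinAt
      · intro x hx
        rw [interior_Icc] at hx
        exact (key x (by linarith [hx.1]) (by linarith [hx.2])).differentiableAt.differentiableWithinAt
      · intro x hx
        rw [interior_Icc] at hx
        have hx0 : (-1:ℝ) < x := by linarith [hx.1]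
        have hx1 : x < 1 := by linarith [hx.2]
        rw [(key x hx0 hx1).deriv, hsign x hx0 hx1]
        obtain ⟨⟨hgt, hlt⟩, _⟩ := tan_facts hx0 hx1
        set t := Real.tan (x * Real.pi / 4)
        have htpos : 0 ≤ t := by
          have := Real.tan_nonneg_of_nonneg_of_le_pi_div_two
            (by nlinarith [mul_pos hx.1 hπ] : (0:ℝ) ≤ x * Real.pi / 4)
            (by nlinarith [mul_pos (by linarith : (0:ℝ) < 1 - x) hπ])
          exact this
        have hden : 0 < 1 + t * r := by
          nlinarith [mul_nonneg (by linarith : (0:ℝ) ≤ 1 + t) hr0]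
        have hQ' : 0 < (1 + t ^ 2) * (1 + r ^ 2) + 4 * r * t := by
          nlinarith [pow_pos hden 2, sq_nonneg (t + r)]
        have h1r2 : (0:ℝ) ≤ 1 - r ^ 2 := by nlinarith
        apply div_nonneg
        · exact mul_nonneg h1r2 (by positivity)
        · positivity
    have := mono (Set.left_mem_Icc.2 hb) (Set.right_mem_Icc.2 hb) hb
    linarith [hF0]
  · have anti : AntitoneOn F (Icc b 0) := by
      apply antitoneOn_of_deriv_nonpos (convex_Icc b 0)
      · intro x hx
        exact (key x (lt_of_lt_of_le hb0 hx.1) (by linarith [hx.2])).continuousAt.continuousWithinAt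
      · intro x hx
        rw [interior_Icc] at hx
        exact (key x (by linarith [hx.1]) (by linarith [hx.2])).differentiableAt.differentiableWithinAt
      · intro x hx
        rw [interior_Icc] at hx
        have hx0 : (-1:ℝ) < x := by linarith [hx.1]
        have hx1 : x < 1 := by linarith [hx.2]
        rw [(key x hx0 hx1).deriv, hsign x hx0 hx1]
        obtain ⟨⟨hgt, hlt⟩, _⟩ := tan_facts hx0 hx1
        have htneg : Real.tan (x * Real.pi / 4) ≤ 0 := by
          have hxneg : x * Real.pi / 4 ≤ 0 := by nlinarith [hx.2]
          exact Real.tan_nonpos_of_nonpos_of_neg_pi_div_two_le hxneg (by nlinarith)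
        set t := Real.tan (x * Real.pi / 4)
        have hden : 0 < 1 + t * r := by
          nlinarith [mul_nonneg (by linarith : (0:ℝ) ≤ 1 + t) hr0]
        have hQ' : 0 < (1 + t ^ 2) * (1 + r ^ 2) + 4 * r * t := by
          nlinarith [pow_pos hden 2, sq_nonneg (t + r)]
        have h1r2 : (0:ℝ) ≤ 1 - r ^ 2 := by nlinarith
        apply div_nonpos_of_nonpos_of_nonneg
        · exact mul_nonpos_of_nonneg_of_nonpos h1r2
            (by nlinarith [mul_nonpos_of_nonneg_of_nonpos hr0 htneg])
        · positivity
    have := anti (Set.left_mem_Icc.2 hb.le) (Set.right_mem_Icc.2 hb.le) hb.le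
    linarith [hF0]
end

section
/- For all r in [0,1) and all b in (-1,1), with a = tan(bπ/4), the inequality ((1-r²)/(1+r²))·b - (4/π)·arctan(r) ≤ (4/π)·arctan((a-r)/(1-ar)) holds. -/
open Real Set

private lemma key_deriv (r : ℝ) (hr0 : 0 ≤ r) (hr1 : r < 1) (x : ℝ) (hx : 1 - x * r > 0) :
    HasDerivAt (fun y : ℝ => Real.arctan ((y - r) / (1 - y * r)) + Real.arctan r
        - ((1 - r ^ 2) / (1 + r ^ 2)) * Real.arctan y)
      ((1 - r ^ 2) / ((1 - x * r) ^ 2 + (x - r) ^ 2)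
        - (1 - r ^ 2) / ((1 + r ^ 2) * (1 + x ^ 2))) x := by
  have hne : 1 - x * r ≠ 0 := ne_of_gt hx
  have h1 : HasDerivAt (fun y : ℝ => (y - r) / (1 - y * r))
      ((1 * (1 - x * r) - (x - r) * (-r)) / (1 - x * r) ^ 2) x := by
    have := ((hasDerivAt_id x).sub_const r).div
      (((hasDerivAt_id x).mul_const r).const_sub 1) hne
    exact this.congr_deriv (by simp only [id]; ring)
  have h2 := (Real.hasDerivAt_arctan ((x - r) / (1 - x * r))).comp x h1
  have h3 := ((Real.hasDerivAt_arctan x).const_mul ((1 - r ^ 2) / (1 + r ^ 2)))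
  have h4 := (h2.add_const (Real.arctan r)).sub h3
  refine h4.congr_deriv ?_
  have hd : (1 - x * r) ^ 2 + (x - r) ^ 2 > 0 := by positivity
  have h1r : (1 + r ^ 2 : ℝ) > 0 := by positivity
  have h1x : (1 + x ^ 2 : ℝ) > 0 := by positivity
  have hu : 1 + ((x - r) / (1 - x * r)) ^ 2 = ((1 - x * r) ^ 2 + (x - r) ^ 2) / (1 - x * r) ^ 2 := by
    field_simp
  rw [hu]
  field_simp
  ring

private lemma key (r : ℝ) (hr0 : 0 ≤ r) (hr1 : r < 1) (a : ℝ) (ha0 : -1 < a) (ha1 : a < 1) :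
    ((1 - r ^ 2) / (1 + r ^ 2)) * Real.arctan a ≤
      Real.arctan ((a - r) / (1 - a * r)) + Real.arctan r := by
  set f : ℝ → ℝ := fun y => Real.arctan ((y - r) / (1 - y * r)) + Real.arctan r
      - ((1 - r ^ 2) / (1 + r ^ 2)) * Real.arctan y with hf
  set f' : ℝ → ℝ := fun x => (1 - r ^ 2) / ((1 - x * r) ^ 2 + (x - r) ^ 2)
      - (1 - r ^ 2) / ((1 + r ^ 2) * (1 + x ^ 2)) with hf'
  have hpos : ∀ x : ℝ, -1 < x → x < 1 → 1 - x * r > 0 := by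
    intro x h1 h2
    nlinarith [abs_nonneg x]
  have hf0 : f 0 = 0 := by
    have : ((0:ℝ) - r) / (1 - 0 * r) = -r := by norm_num
    simp [hf, this, Real.arctan_neg, Real.arctan_zero]
  have hD : ∀ x : ℝ, 1 - x * r > 0 → (1 - x * r) ^ 2 + (x - r) ^ 2 > 0 := by
    intro x hx; positivity
  rcases le_or_gt 0 a with hA | hA
  · -- a ≥ 0 : f monotone on [0, a]
    have hmono : MonotoneOn f (Icc 0 a) := by
      apply monotoneOn_of_hasDerivWithinAt_nonneg (convex_Icc 0 a) (f' := f')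
      · intro x hx
        have hx1 : x < 1 := lt_of_le_of_lt hx.2 ha1
        have := key_deriv r hr0 hr1 x (hpos x (by linarith [hx.1]) hx1)
        exact ContinuousAt.continuousWithinAt (this.continuousAt)
      · intro x hx
        rw [interior_Icc] at hx
        have hx1 : x < 1 := lt_of_lt_of_le hx.2 (le_of_lt ha1)
        exact (key_deriv r hr0 hr1 x (hpos x (by linarith [hx.1]) hx1)).hasDerivWithinAt
      · intro x hx
        rw [interior_Icc] at hx
        have hx0 : 0 < x := hx.1
        have hx1 : x < 1 := lt_of_lt_of_le hx.2 (le_of_lt ha1)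
        have hxr : 1 - x * r > 0 := hpos x (by linarith) hx1
        have hDpos : (1 - x * r) ^ 2 + (x - r) ^ 2 > 0 := by positivity
        have hle : (1 - x * r) ^ 2 + (x - r) ^ 2 ≤ (1 + r ^ 2) * (1 + x ^ 2) := by nlinarith
        have h1 : (1 - r ^ 2) / ((1 + r ^ 2) * (1 + x ^ 2)) ≤
            (1 - r ^ 2) / ((1 - x * r) ^ 2 + (x - r) ^ 2) := by
          gcongr
          nlinarith
        simp only [hf', sub_nonneg]
        exact h1
    have := hmono (left_mem_Icc.2 hA) (right_mem_Icc.2 hA) hA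
    rw [hf0] at this
    simpa [hf, sub_nonneg] using this
  · -- a < 0 : f antitone on [a, 0]
    have hanti : AntitoneOn f (Icc a 0) := by
      apply antitoneOn_of_hasDerivWithinAt_nonpos (convex_Icc a 0) (f' := f')
      · intro x hx
        have hx1 : x < 1 := lt_of_le_of_lt hx.2 one_pos
        have := key_deriv r hr0 hr1 x (hpos x (by linarith [hx.1, ha0]) hx1)
        exact ContinuousAt.continuousWithinAt (this.continuousAt)
      · intro x hx
        rw [interior_Icc] at hx
        exact (key_deriv r hr0 hr1 x (hpos x (by linarith [hx.1]) (by linarith [hx.2]))).hasDerivWithinAt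
      · intro x hx
        rw [interior_Icc] at hx
        have hx0 : x < 0 := hx.2
        have hx1 : -1 < x := lt_trans ha0 hx.1
        have hxr : 1 - x * r > 0 := hpos x (by linarith [hx.1]) (by linarith)
        have hDpos : (1 - x * r) ^ 2 + (x - r) ^ 2 > 0 := by positivity
        have hge : (1 + r ^ 2) * (1 + x ^ 2) ≤ (1 - x * r) ^ 2 + (x - r) ^ 2 := by nlinarith
        have h1 : (1 - r ^ 2) / ((1 - x * r) ^ 2 + (x - r) ^ 2) ≤
            (1 - r ^ 2) / ((1 + r ^ 2) * (1 + x ^ 2)) := by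
          gcongr
          nlinarith
        simp only [hf', sub_nonpos]
        exact h1
    have := hanti (left_mem_Icc.2 (le_of_lt hA)) (right_mem_Icc.2 (le_of_lt hA)) (le_of_lt hA)
    rw [hf0] at this
    simpa [hf, sub_nonneg] using this

/-- For all r in [0,1) and all b in (-1,1), with a = tan(bπ/4),
((1-r²)/(1+r²))·b - (4/π)·arctan(r) ≤ (4/π)·arctan((a-r)/(1-ar)). -/
theorem Bb_le_mb (r b a : ℝ) (hr0 : 0 ≤ r) (hr1 : r < 1)
    (hb0 : -1 < b) (hb1 : b < 1) (ha : a = Real.tan (b * Real.pi / 4)) :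
    ((1 - r ^ 2) / (1 + r ^ 2)) * b - (4 / Real.pi) * Real.arctan r ≤
      (4 / Real.pi) * Real.arctan ((a - r) / (1 - a * r)) := by
  have hπ : (0:ℝ) < Real.pi := Real.pi_pos
  have hlow : -(Real.pi/2) < b * Real.pi / 4 := by nlinarith
  have hhigh : b * Real.pi / 4 < Real.pi/2 := by nlinarith
  have hata : Real.arctan a = b * Real.pi / 4 := by
    rw [ha, Real.arctan_tan hlow hhigh]
  have ha1 : a < 1 := by
    have h1 : Real.arctan a < Real.arctan 1 := by
      rw [hata, Real.arctan_one]; nlinarith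
    exact Real.arctan_strictMono.lt_iff_lt.mp h1
  have ha0 : -1 < a := by
    have h1 : Real.arctan (-1) < Real.arctan a := by
      rw [hata, Real.arctan_neg, Real.arctan_one]; nlinarith
    exact Real.arctan_strictMono.lt_iff_lt.mp h1
  have hkey := key r hr0 hr1 a ha0 ha1
  rw [hata] at hkey
  have h4π : (0:ℝ) < 4 / Real.pi := by positivity
  have hb' : ((1 - r ^ 2) / (1 + r ^ 2)) * b =
      (4 / Real.pi) * (((1 - r ^ 2) / (1 + r ^ 2)) * (b * Real.pi / 4)) := by
    field_simp
  rw [hb']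
  nlinarith [mul_le_mul_of_nonneg_left hkey (le_of_lt h4π)]
end

section
/- Fix r ∈ (0,1) and define φ(a) = arctan(a(1-r²)/(r²+2ar+1)) - ((1-r²)/(1+r²))·arctan(a) for a ∈ (-1,1). Then φ(a) ≤ 0 for all a ∈ [0,1) (equivalently, φ attains its maximum value 0 at a = 0). -/
/-- for fixed r ∈ (0,1), φ(a) = arctan(a(1-r²)/(r²+2ar+1)) -
((1-r²)/(1+r²))·arctan(a) satisfies φ(a) ≤ 0 for a ∈ [0,1). -/
theorem phi_nonpos (r : ℝ) (hr0 : 0 < r) (hr1 : r < 1) (a : ℝ) (ha0 : 0 ≤ a) (ha1 : a < 1) :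
    Real.arctan (a * (1 - r ^ 2) / (r ^ 2 + 2 * a * r + 1)) -
      ((1 - r ^ 2) / (1 + r ^ 2)) * Real.arctan a ≤ 0 := by
  have hr2 : (0:ℝ) < 1 - r ^ 2 := by nlinarith
  have hr3 : (0:ℝ) < 1 + r ^ 2 := by positivity
  set f : ℝ → ℝ := fun x => Real.arctan (x * (1 - r ^ 2) / (r ^ 2 + 2 * x * r + 1)) -
      ((1 - r ^ 2) / (1 + r ^ 2)) * Real.arctan x with hf
  have hderiv : ∀ x : ℝ, 0 ≤ x → HasDerivAt f
      ((1 - r ^ 2) * (1 + r ^ 2) / ((r ^ 2 + 2 * x * r + 1) ^ 2 + x ^ 2 * (1 - r ^ 2) ^ 2)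
        - (1 - r ^ 2) / (1 + r ^ 2) * (1 / (1 + x ^ 2))) x := by
    intro x hx
    have hqpos : (0:ℝ) < r ^ 2 + 2 * x * r + 1 := by nlinarith [mul_nonneg hx hr0.le]
    have hq : r ^ 2 + 2 * x * r + 1 ≠ 0 := ne_of_gt hqpos
    have h1 : HasDerivAt (fun x : ℝ => x * (1 - r ^ 2)) (1 - r ^ 2) x := by
      simpa using (hasDerivAt_id x).mul_const (1 - r ^ 2)
    have h2 : HasDerivAt (fun x : ℝ => r ^ 2 + 2 * x * r + 1) (2 * r) x := by
      have : HasDerivAt (fun x : ℝ => 2 * x * r) (2 * r) x := by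
        simpa using ((hasDerivAt_id x).const_mul (2:ℝ)).mul_const r
      simpa using (this.const_add (r ^ 2)).add_const 1
    have hu : HasDerivAt (fun x : ℝ => x * (1 - r ^ 2) / (r ^ 2 + 2 * x * r + 1))
        (((1 - r ^ 2) * (r ^ 2 + 2 * x * r + 1) - x * (1 - r ^ 2) * (2 * r)) /
          (r ^ 2 + 2 * x * r + 1) ^ 2) x := h1.div h2 hq
    have ha := hu.arctan
    have hb := (Real.hasDerivAt_arctan x).const_mul ((1 - r ^ 2) / (1 + r ^ 2))
    have hcomb := ha.sub hb
    refine hcomb.congr_deriv ?_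
    have hA : (0:ℝ) < (r ^ 2 + 2 * x * r + 1) ^ 2 + x ^ 2 * (1 - r ^ 2) ^ 2 := by positivity
    field_simp
    ring
  have hmono : AntitoneOn f (Set.Ici (0:ℝ)) := by
    apply antitoneOn_of_deriv_nonpos (convex_Ici 0)
    · intro x hx
      exact (hderiv x hx).continuousAt.continuousWithinAt
    · intro x hx
      rw [interior_Ici] at hx
      exact (hderiv x hx.le).differentiableAt.differentiableWithinAt
    · intro x hx
      rw [interior_Ici] at hx
      rw [(hderiv x hx.le).deriv, sub_nonpos]
      have hx0 : (0:ℝ) ≤ x := hx.le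
      have hA : (0:ℝ) < (r ^ 2 + 2 * x * r + 1) ^ 2 + x ^ 2 * (1 - r ^ 2) ^ 2 := by positivity
      rw [div_mul_div_comm, mul_one, div_le_div_iff₀ hA (by positivity)]
      nlinarith [mul_nonneg hx0 hr0.le, sq_nonneg r, mul_nonneg (mul_nonneg hx0 hr0.le) (sq_nonneg r)]
  have h0 : f a ≤ f 0 := hmono (Set.mem_Ici.mpr (le_refl 0)) (Set.mem_Ici.mpr ha0) ha0
  have hf0 : f 0 = 0 := by simp [hf]
  calc Real.arctan (a * (1 - r ^ 2) / (r ^ 2 + 2 * a * r + 1)) -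
      ((1 - r ^ 2) / (1 + r ^ 2)) * Real.arctan a = f a := rfl
    _ ≤ f 0 := h0
    _ = 0 := hf0
end

section
/- Let b ∈ (0,1). The function A_b(r) = ((1-r²)/(1+r²))·b + (4/π)·arctan(r) satisfies A_b(0) = b and A_b(1) = 1; moreover, if b > 2/π then there exists a unique r₀ ∈ (0,1) with A_b(r₀) = 1, and max over r ∈ [0,1] of A_b(r) > 1. -/
open Real Set

/-- for b ∈ (0,1), A_b(r) = ((1-r²)/(1+r²))·b + (4/π)·arctan r satisfies
A_b(0) = b, A_b(1) = 1, and if b > 2/π there is a unique r₀ ∈ (0,1) with A_b(r₀) = 1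
and the maximum of A_b over [0,1] exceeds 1. -/
theorem Ab_properties (b : ℝ) (hb0 : 0 < b) (hb1 : b < 1) :
    (fun r : ℝ => ((1 - r ^ 2) / (1 + r ^ 2)) * b + (4 / Real.pi) * Real.arctan r) 0 = b ∧
    (fun r : ℝ => ((1 - r ^ 2) / (1 + r ^ 2)) * b + (4 / Real.pi) * Real.arctan r) 1 = 1 ∧
    (b > 2 / Real.pi →
      (∃! r₀ : ℝ, r₀ ∈ Ioo (0 : ℝ) 1 ∧
        ((1 - r₀ ^ 2) / (1 + r₀ ^ 2)) * b + (4 / Real.pi) * Real.arctan r₀ = 1) ∧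
      (∃ r ∈ Icc (0 : ℝ) 1,
        ((1 - r ^ 2) / (1 + r ^ 2)) * b + (4 / Real.pi) * Real.arctan r > 1)) := by
  have hπ : (0:ℝ) < Real.pi := Real.pi_pos
  have hπ' : Real.pi ≠ 0 := ne_of_gt hπ
  set f : ℝ → ℝ := fun r : ℝ =>
    ((1 - r ^ 2) / (1 + r ^ 2)) * b + (4 / Real.pi) * Real.arctan r with hf
  have hden : ∀ r : ℝ, (0:ℝ) < 1 + r ^ 2 := fun r => by positivity
  have hden' : ∀ r : ℝ, (1:ℝ) + r ^ 2 ≠ 0 := fun r => ne_of_gt (hden r)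
  have h0 : f 0 = b := by simp [hf]
  have h1 : f 1 = 1 := by
    simp only [hf, Real.arctan_one]
    field_simp
    ring
  refine ⟨h0, h1, fun hb => ?_⟩
  -- derivative
  have hderiv : ∀ r : ℝ, HasDerivAt f
      ((-4 * r / (1 + r ^ 2) ^ 2) * b + (4 / Real.pi) * (1 / (1 + r ^ 2))) r := by
    intro r
    have h1' : HasDerivAt (fun x : ℝ => 1 - x ^ 2) (-(2 * r)) r := by
      simpa using ((hasDerivAt_pow 2 r).const_sub 1)
    have h2' : HasDerivAt (fun x : ℝ => 1 + x ^ 2) (2 * r) r := by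
      simpa using ((hasDerivAt_pow 2 r).const_add 1)
    have h3 := (h1'.div h2' (hden' r)).mul_const b
    have h5 := (Real.hasDerivAt_arctan r).const_mul (4 / Real.pi)
    have h6 := h3.add h5
    refine h6.congr_deriv ?_
    have := hden' r
    field_simp
    ring
  have hdiff : Differentiable ℝ f := fun r => (hderiv r).differentiableAt
  have hcont : Continuous f := hdiff.continuous
  have hg : ∀ r : ℝ, deriv f r =
      4 * (1 + r ^ 2 - Real.pi * b * r) / (Real.pi * (1 + r ^ 2) ^ 2) := by
    intro r
    rw [(hderiv r).deriv]
    have := hden' r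
    field_simp
    ring
  set c : ℝ := Real.pi * b with hc
  have hc2 : 2 < c := by
    have := (div_lt_iff₀ hπ).mp hb
    linarith [this]
  set d : ℝ := Real.sqrt (c ^ 2 - 4) with hd
  have hd0 : 0 ≤ d := Real.sqrt_nonneg _
  have hd2 : d ^ 2 = c ^ 2 - 4 := Real.sq_sqrt (by nlinarith)
  have hdc : d < c := by nlinarith
  have hdgt : c - 2 < d := by nlinarith
  set r₁ : ℝ := (c - d) / 2 with hr1
  have hr1pos : 0 < r₁ := by simp only [hr1]; linarith
  have hr1lt : r₁ < 1 := by simp only [hr1]; linarith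
  have hr2gt : (1:ℝ) < (c + d) / 2 := by linarith
  have hfact : ∀ r : ℝ, 1 + r ^ 2 - c * r = (r₁ - r) * ((c + d) / 2 - r) := by
    intro r
    simp only [hr1]
    linear_combination hd2 / 4
  -- strict monotonicity on [0, r₁]
  have hmono : StrictMonoOn f (Icc 0 r₁) := by
    apply strictMonoOn_of_deriv_pos (convex_Icc _ _) hcont.continuousOn
    intro x hx
    rw [interior_Icc] at hx
    rw [hg x]
    have hq : 0 < 1 + x ^ 2 - c * x := by
      rw [hfact x]
      have h1 : 0 < r₁ - x := by linarith [hx.2]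
      have h2 : 0 < (c + d) / 2 - x := by nlinarith [hx.2, hr1lt, hr2gt]
      exact mul_pos h1 h2
    have : (0:ℝ) < Real.pi * (1 + x ^ 2) ^ 2 := by positivity
    positivity
  -- strict antitonicity on [r₁, 1]
  have hanti : StrictAntiOn f (Icc r₁ 1) := by
    apply strictAntiOn_of_deriv_neg (convex_Icc _ _) hcont.continuousOn
    intro x hx
    rw [interior_Icc] at hx
    rw [hg x]
    have hq : 1 + x ^ 2 - c * x < 0 := by
      rw [hfact x]
      have h1 : r₁ - x < 0 := by linarith [hx.1]
      have h2 : 0 < (c + d) / 2 - x := by linarith [hx.2, hr2gt]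
      exact mul_neg_of_neg_of_pos h1 h2
    have hpos : (0:ℝ) < Real.pi * (1 + x ^ 2) ^ 2 := by positivity
    apply div_neg_of_neg_of_pos _ hpos
    linarith
  have hfr1 : 1 < f r₁ := by
    have := hanti ⟨le_refl r₁, le_of_lt hr1lt⟩ ⟨le_of_lt hr1lt, le_refl 1⟩ hr1lt
    rw [h1] at this
    exact this
  -- existence via IVT on [0, r₁]
  have hivt : (1:ℝ) ∈ f '' Ioo 0 r₁ := by
    apply intermediate_value_Ioo (le_of_lt hr1pos) hcont.continuousOn
    rw [h0]
    exact ⟨hb1, hfr1⟩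
  obtain ⟨r₀, hr₀mem, hr₀eq⟩ := hivt
  have hr₀Ioo : r₀ ∈ Ioo (0:ℝ) 1 := ⟨hr₀mem.1, lt_trans hr₀mem.2 hr1lt⟩
  constructor
  · refine ⟨r₀, ⟨hr₀Ioo, hr₀eq⟩, ?_⟩
    rintro r ⟨hrIoo, hreq⟩
    by_cases hcase : r ≤ r₁
    · exact hmono.injOn ⟨le_of_lt hrIoo.1, hcase⟩
        ⟨le_of_lt hr₀mem.1, le_of_lt hr₀mem.2⟩ (hreq.trans hr₀eq.symm)
    · exfalso
      push_neg at hcase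
      have := hanti ⟨le_of_lt hcase, le_of_lt hrIoo.2⟩
        ⟨le_of_lt hr1lt, le_refl 1⟩ hrIoo.2
      rw [h1] at this
      rw [show f r = 1 from hreq] at this
      exact lt_irrefl 1 this
  · exact ⟨r₁, ⟨le_of_lt hr1pos, le_of_lt hr1lt⟩, hfr1⟩
end
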